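/- Let ε ∈ [0,1) and suppose the map R ↦ g(R) is continuous and non-increasing on (0, R_max] with g(R_max) ≤ (1−ε)·R_max, g(R) > 0 for some R, and lim_{R→0⁺} g(R)/R = ∞. Then there exists a unique R* ∈ (0, R_max] with R* = g(R*)/(1−ε). -/

import Mathlib

/-- Fixed-point existence and uniqueness for the secrecy-capacity equation
`R = g(R)/(1−ε)`. -/
theorem capacity_fixed_point_exists_unique (g : ℝ → ℝ) (Rmax ε : ℝ)
    (hε : 0 ≤ ε) (hε1 : ε < 1) (hRmax : 0 < Rmax)
    (hcont : ContinuousOn g (Set.Ioc 0 Rmax))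
    (hmono : AntitoneOn g (Set.Ioc 0 Rmax))
    (hend : g Rmax ≤ (1 - ε) * Rmax)
    (hpos : ∃ R ∈ Set.Ioc (0 : ℝ) Rmax, 0 < g R)
    (hlim : Filter.Tendsto (fun R => g R / R) (nhdsWithin 0 (Set.Ioi 0))
      Filter.atTop) :
    ∃! R : ℝ, R ∈ Set.Ioc (0 : ℝ) Rmax ∧ R = g R / (1 - ε) := by
  have h1ε : 0 < 1 - ε := by linarith
  -- find a small point a with g a ≥ (1-ε) a
  have hev1 : ∀ᶠ R in nhdsWithin 0 (Set.Ioi 0), 1 - ε ≤ g R / R :=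
    hlim.eventually_ge_atTop (1 - ε)
  have hev2 : ∀ᶠ R in nhdsWithin 0 (Set.Ioi 0), R < Rmax :=
    Filter.Eventually.filter_mono nhdsWithin_le_nhds (gt_mem_nhds hRmax)
  have hev3 : ∀ᶠ R in nhdsWithin 0 (Set.Ioi 0), R ∈ Set.Ioi (0 : ℝ) :=
    self_mem_nhdsWithin
  obtain ⟨a, ha1, ha2, ha3⟩ := (hev1.and (hev2.and hev3)).exists
  have ha0 : (0 : ℝ) < a := ha3
  have haR : a ≤ Rmax := le_of_lt ha2
  have hga : (1 - ε) * a ≤ g a := (le_div_iff₀ ha0).mp ha1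
  -- intermediate value theorem for h = g - (1-ε)·id on [a, Rmax]
  set h : ℝ → ℝ := fun R => g R - (1 - ε) * R with hh
  have hsub : Set.Icc a Rmax ⊆ Set.Ioc 0 Rmax := fun x hx =>
    ⟨lt_of_lt_of_le ha0 hx.1, hx.2⟩
  have hconth : ContinuousOn h (Set.Icc a Rmax) :=
    (hcont.mono hsub).sub ((continuous_const.mul continuous_id).continuousOn)
  have h0mem : (0 : ℝ) ∈ Set.Icc (h Rmax) (h a) := by
    constructor
    · simp only [hh]; linarith
    · simp only [hh]; linarith
  obtain ⟨c, hc, hc0⟩ := intermediate_value_Icc' haR hconth h0mem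
  have hcmem : c ∈ Set.Ioc (0 : ℝ) Rmax := hsub hc
  refine ⟨c, ⟨hcmem, ?_⟩, ?_⟩
  · have : g c = (1 - ε) * c := by
      have := hc0; simp only [hh] at this; linarith
    field_simp [this]
    linarith
  · rintro y ⟨hymem, hy⟩
    have hyg : (1 - ε) * y = g y := by
      field_simp at hy; linarith [hy]
    have hcg : (1 - ε) * c = g c := by
      have := hc0; simp only [hh] at this; linarith
    rcases le_total y c with hle | hle
    · have := hmono hymem hcmem hle
      nlinarith
    · have := hmono hcmem hymem hle
      nlinarith
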